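/- Let n ≥ 1 and Δ ∈ ℝ^{n×n} be entrywise nonnegative with spectral radius ρ(Δ) < 1. Then I − Δ is invertible, every real matrix A with |A − I| ≤ Δ entrywise is invertible and satisfies (A^{-1})_{ij} ≤ ((I − Δ)^{-1})_{ij} for all i, j; moreover for every i, j the maximum of (A^{-1})_{ij} over all A with |A − I| ≤ Δ equals ((I − Δ)^{-1})_{ij}, attained at A = I − Δ. (Upper-bound part of Rohn's theorem: the entrywise maximum of inverses over [I − Δ, I + Δ] is H̄ = (I − Δ)^{-1}.) -/

import Mathlib

open Matrix

/-- Spectral radius of a real square matrix: the maximum modulus of its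
complex eigenvalues, formalized via the spectral radius of the matrix
viewed over `ℂ`. -/
noncomputable def specRad {n : ℕ} (M : Matrix (Fin n) (Fin n) ℝ) : ENNReal :=
  spectralRadius ℂ (M.map (algebraMap ℝ ℂ))

namespace RohnAux

open Filter Topology ENNReal NNReal
open scoped ENNReal NNReal

attribute [local instance] Matrix.linftyOpSeminormedAddCommGroup
  Matrix.linftyOpNormedAddCommGroup Matrix.linftyOpNormedRing
  Matrix.linftyOpNormedAlgebra Matrix.linftyOpNormedSpace

variable {n : ℕ}

local instance : CompleteSpace (Matrix (Fin n) (Fin n) ℂ) :=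
  FiniteDimensional.complete ℂ _

local instance : CompleteSpace (Matrix (Fin n) (Fin n) ℝ) :=
  FiniteDimensional.complete ℝ _

lemma entry_nnnorm_le {α : Type*} [SeminormedAddCommGroup α]
    (M : Matrix (Fin n) (Fin n) α) (i j : Fin n) : ‖M i j‖₊ ≤ ‖M‖₊ := by
  rw [Matrix.linfty_opNNNorm_def]
  exact le_trans
    (Finset.single_le_sum (f := fun j => ‖M i j‖₊) (fun _ _ => zero_le) (Finset.mem_univ j))
    (Finset.le_sup (f := fun i => ∑ j, ‖M i j‖₊) (Finset.mem_univ i))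

lemma entry_norm_le {α : Type*} [SeminormedAddCommGroup α]
    (M : Matrix (Fin n) (Fin n) α) (i j : Fin n) : ‖M i j‖ ≤ ‖M‖ :=
  entry_nnnorm_le M i j

lemma norm_le_norm_of_entry {A B : Matrix (Fin n) (Fin n) ℝ}
    (h : ∀ i j, |A i j| ≤ |B i j|) : ‖A‖ ≤ ‖B‖ := by
  have : ‖A‖₊ ≤ ‖B‖₊ := by
    rw [Matrix.linfty_opNNNorm_def, Matrix.linfty_opNNNorm_def]
    refine Finset.sup_le fun i _ => le_trans (Finset.sum_le_sum fun j _ => ?_)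
      (Finset.le_sup (f := fun i => ∑ j, ‖B i j‖₊) (Finset.mem_univ i))
    rw [← NNReal.coe_le_coe]
    simpa [Real.norm_eq_abs] using h i j
  exact this

lemma nnnorm_map_complex (M : Matrix (Fin n) (Fin n) ℝ) :
    ‖M.map (algebraMap ℝ ℂ)‖₊ = ‖M‖₊ := by
  rw [Matrix.linfty_opNNNorm_def, Matrix.linfty_opNNNorm_def]
  congr 1
  ext i
  simp [Matrix.map_apply]

lemma abs_pow_le {E Δ : Matrix (Fin n) (Fin n) ℝ} (hE : ∀ i j, |E i j| ≤ Δ i j) :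
    ∀ k i j, |(E ^ k) i j| ≤ (Δ ^ k) i j := by
  intro k
  induction k with
  | zero =>
    intro i j
    simp only [pow_zero]
    by_cases h : i = j <;> simp [Matrix.one_apply, h]
  | succ k ih =>
    intro i j
    rw [pow_succ, pow_succ, Matrix.mul_apply, Matrix.mul_apply]
    refine le_trans (Finset.abs_sum_le_sum_abs _ _) (Finset.sum_le_sum fun l _ => ?_)
    rw [abs_mul]
    exact mul_le_mul (ih i l) (hE l j) (abs_nonneg _) (le_trans (abs_nonneg _) (ih i l))

lemma hasSum_entry {f : ℕ → Matrix (Fin n) (Fin n) ℝ} {S : Matrix (Fin n) (Fin n) ℝ}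
    (h : HasSum f S) (i j : Fin n) : HasSum (fun k => f k i j) (S i j) := by
  have hc : Continuous (fun M : Matrix (Fin n) (Fin n) ℝ => M i j) := by
    refine AddMonoidHomClass.continuous_of_bound
      (AddMonoidHom.mk' (fun M : Matrix (Fin n) (Fin n) ℝ => M i j) (fun _ _ => rfl)) 1
      fun M => ?_
    show ‖M i j‖ ≤ 1 * ‖M‖
    simpa using entry_norm_le M i j
  exact h.map (AddMonoidHom.mk' (fun M : Matrix (Fin n) (Fin n) ℝ => M i j) (fun _ _ => rfl)) hc

theorem neumann (Δ : Matrix (Fin n) (Fin n) ℝ) (hρ : specRad Δ < 1)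
    (E : Matrix (Fin n) (Fin n) ℝ) (hE : ∀ i j, |E i j| ≤ Δ i j) :
    IsUnit (1 - E) ∧ HasSum (fun k => E ^ k) (1 - E)⁻¹ := by
  classical
  set a : Matrix (Fin n) (Fin n) ℂ := Δ.map (algebraMap ℝ ℂ) with ha
  have hpow : ∀ k : ℕ, a ^ k = (Δ ^ k).map (algebraMap ℝ ℂ) := by
    intro k
    rw [ha, ← RingHom.mapMatrix_apply, ← RingHom.mapMatrix_apply, ← map_pow]
  obtain ⟨r, hr1, hr2⟩ := ENNReal.lt_iff_exists_nnreal_btwn.mp hρ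
  have hr2' : (r : ℝ) < 1 := by exact_mod_cast hr2
  have gel := spectrum.pow_nnnorm_pow_one_div_tendsto_nhds_spectralRadius a
  have hev : ∀ᶠ k : ℕ in atTop, (‖a ^ k‖₊ : ℝ≥0∞) ^ (1 / (k : ℝ)) < r :=
    gel.eventually_lt_const hr1
  have hbound : ∀ᶠ k : ℕ in atTop, ‖Δ ^ k‖ ≤ (r : ℝ) ^ k := by
    filter_upwards [hev, eventually_ge_atTop 1] with k hk hk1
    have hk0 : (k : ℝ) ≠ 0 := by positivity
    have hx : (‖a ^ k‖₊ : ℝ≥0∞) ≤ (r : ℝ≥0∞) ^ (k : ℝ) := by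
      have := ENNReal.rpow_le_rpow hk.le (Nat.cast_nonneg k : (0:ℝ) ≤ k)
      rwa [← ENNReal.rpow_mul, one_div, inv_mul_cancel₀ hk0, ENNReal.rpow_one] at this
    rw [ENNReal.rpow_natCast, ← ENNReal.coe_pow, ENNReal.coe_le_coe] at hx
    have hnorm : ‖Δ ^ k‖₊ = ‖a ^ k‖₊ := by rw [hpow]; exact (nnnorm_map_complex _).symm
    calc ‖Δ ^ k‖ = ((‖a ^ k‖₊ : ℝ≥0) : ℝ) := by rw [← hnorm]; rfl
      _ ≤ ((r ^ k : ℝ≥0) : ℝ) := by exact_mod_cast hx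
      _ = (r : ℝ) ^ k := by push_cast; ring
  have hΔpow_nonneg : ∀ k i j, (0:ℝ) ≤ (Δ ^ k) i j := fun k i j =>
    le_trans (abs_nonneg _) (abs_pow_le hE k i j)
  have hEk : ∀ k, ‖E ^ k‖ ≤ ‖Δ ^ k‖ := fun k =>
    norm_le_norm_of_entry fun i j => by
      rw [abs_of_nonneg (hΔpow_nonneg k i j)]; exact abs_pow_le hE k i j
  have hsum : Summable (fun k => E ^ k) := by
    refine Summable.of_norm_bounded_eventually (g := fun k => (r : ℝ) ^ k)
      (summable_geometric_of_lt_one r.coe_nonneg hr2') ?_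
    rw [Nat.cofinite_eq_atTop]
    filter_upwards [hbound] with k hk
    exact le_trans (by simpa using hEk k) hk
  set S := ∑' k, E ^ k with hS
  have hasS : HasSum (fun k => E ^ k) S := hsum.hasSum
  have h1 : HasSum (fun k => E ^ (k + 1)) (S - 1) := by
    have := (hasSum_nat_add_iff' (f := fun k => E ^ k) 1).mpr hasS
    simpa using this
  have hESl : E * S = S - 1 :=
    (hasS.mul_left E).unique (by simpa [← pow_succ'] using h1)
  have hESr : S * E = S - 1 :=
    (hasS.mul_right E).unique (by simpa [← pow_succ] using h1)
  have left : (1 - E) * S = 1 := by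
    rw [sub_mul, one_mul, hESl]; abel
  have right : S * (1 - E) = 1 := by
    rw [mul_sub, mul_one, hESr]; abel
  refine ⟨⟨⟨1 - E, S, left, right⟩, rfl⟩, ?_⟩
  rwa [Matrix.inv_eq_right_inv left]

end RohnAux

/-- Upper-bound part of Rohn's theorem: if `Δ ≥ 0` entrywise and `ρ(Δ) < 1`,
then `I - Δ` is invertible, every `A` with `|A - I| ≤ Δ` is invertible with
`A⁻¹ ≤ (I - Δ)⁻¹` entrywise, and for every entry the maximum of `A⁻¹` over
the interval matrix `[I - Δ, I + Δ]` equals `((I - Δ)⁻¹)_{ij}` (attained at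
`A = I - Δ`). -/
theorem stmt_1 {n : ℕ} (hn : 1 ≤ n) (Δ : Matrix (Fin n) (Fin n) ℝ)
    (hΔ : ∀ i j, 0 ≤ Δ i j)
    (hρ : specRad Δ < 1) :
    IsUnit ((1 : Matrix (Fin n) (Fin n) ℝ) - Δ) ∧
    (∀ A : Matrix (Fin n) (Fin n) ℝ,
      (∀ i j, |A i j - (1 : Matrix (Fin n) (Fin n) ℝ) i j| ≤ Δ i j) →
      IsUnit A ∧ ∀ i j, A⁻¹ i j ≤ ((1 : Matrix (Fin n) (Fin n) ℝ) - Δ)⁻¹ i j) ∧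
    (∀ i j, IsGreatest
      {v : ℝ | ∃ A : Matrix (Fin n) (Fin n) ℝ,
        (∀ i' j', |A i' j' - (1 : Matrix (Fin n) (Fin n) ℝ) i' j'| ≤ Δ i' j') ∧
        v = A⁻¹ i j}
      (((1 : Matrix (Fin n) (Fin n) ℝ) - Δ)⁻¹ i j)) := by
  have hΔself : ∀ i j, |Δ i j| ≤ Δ i j := fun i j => (abs_of_nonneg (hΔ i j)).le
  obtain ⟨hu, hsΔ⟩ := RohnAux.neumann Δ hρ Δ hΔself
  have main : ∀ A : Matrix (Fin n) (Fin n) ℝ,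
      (∀ i j, |A i j - (1 : Matrix (Fin n) (Fin n) ℝ) i j| ≤ Δ i j) →
      IsUnit A ∧ ∀ i j, A⁻¹ i j ≤ ((1 : Matrix (Fin n) (Fin n) ℝ) - Δ)⁻¹ i j := by
    intro A hA
    set E : Matrix (Fin n) (Fin n) ℝ := 1 - A with hEdef
    have hE : ∀ i j, |E i j| ≤ Δ i j := fun i j => by
      have := hA i j
      rw [hEdef]
      simpa [Matrix.sub_apply, abs_sub_comm] using this
    obtain ⟨huA, hsA⟩ := RohnAux.neumann Δ hρ E hE
    have h1E : (1 : Matrix (Fin n) (Fin n) ℝ) - E = A := by rw [hEdef, sub_sub_cancel]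
    rw [h1E] at huA hsA
    refine ⟨huA, fun i j => ?_⟩
    exact hasSum_le
      (fun k => le_trans (le_abs_self _) (RohnAux.abs_pow_le hE k i j))
      (RohnAux.hasSum_entry hsA i j) (RohnAux.hasSum_entry hsΔ i j)
  refine ⟨hu, main, fun i j => ⟨⟨1 - Δ, fun i' j' => ?_, rfl⟩, ?_⟩⟩
  · simp [Matrix.sub_apply, abs_of_nonneg (hΔ i' j')]
  · rintro v ⟨A, hA, rfl⟩
    exact (main A hA).2 i j
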